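/- Let 𝒟 be a nonempty finite set (of possible datasets), let L : (density matrices of dimension d) × 𝒟 → ℝ be a measurable nonnegative likelihood function, and let π be a Borel probability measure on the density matrices of dimension d. For a dataset D with normalization Z(D) = ∫ L(ρ, D) dπ(ρ) > 0, define the posterior-mean estimator ρ̂(D) = Z(D)⁻¹ · ∫ ρ · L(ρ, D) dπ(ρ). Suppose D₁, D₂ ∈ 𝒟 satisfy Z(D₁) > 0 and Z(D₂) > 0, and the estimates σ₁ = ρ̂(D₁) and σ₂ = ρ̂(D₂) are both pure states with σ₁ ≠ σ₂. Then L(σ₂, D₁) = 0 and L(σ₁, D₂) = 0; i.e., each dataset must rule out the pure state reported for the other dataset. (Consequently, an estimator that is a posterior-mean—i.e., Bayes for a Bregman divergence—cannot report two distinct pure states on datasets unless each dataset assigns zero likelihood to the other's estimate.) -/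

import Mathlib

open Matrix MeasureTheory
open scoped ComplexOrder Classical

/-- A density matrix of dimension `d`: a complex `d × d` positive semidefinite matrix
of trace 1. -/
def IsDensityMatrix {d : ℕ} (ρ : Matrix (Fin d) (Fin d) ℂ) : Prop :=
  ρ.PosSemidef ∧ ρ.trace = 1

/-- A pure state: a density matrix that is a rank-one orthogonal projection,
i.e. it satisfies `ρ * ρ = ρ` and has rank one. -/
def IsPureState {d : ℕ} (ρ : Matrix (Fin d) (Fin d) ℂ) : Prop :=
  IsDensityMatrix ρ ∧ ρ * ρ = ρ ∧ ρ.rank = 1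

noncomputable instance matrixMeasurableSpace {d : ℕ} :
    MeasurableSpace (Matrix (Fin d) (Fin d) ℂ) := borel _

instance matrixBorelSpace {d : ℕ} :
    BorelSpace (Matrix (Fin d) (Fin d) ℂ) := ⟨rfl⟩

lemma sum_normSq_eq_zero {d : ℕ} {M : Matrix (Fin d) (Fin d) ℂ}
    (h : ∑ i, ∑ j, Complex.normSq (M i j) = 0) : M = 0 := by
  ext i j
  have hi : ∀ i ∈ Finset.univ, (0:ℝ) ≤ ∑ j, Complex.normSq (M i j) :=
    fun i _ => Finset.sum_nonneg fun j _ => Complex.normSq_nonneg _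
  have h2 := (Finset.sum_eq_zero_iff_of_nonneg hi).mp h i (Finset.mem_univ i)
  have hj : ∀ j ∈ Finset.univ, (0:ℝ) ≤ Complex.normSq (M i j) :=
    fun j _ => Complex.normSq_nonneg _
  have := (Finset.sum_eq_zero_iff_of_nonneg hj).mp h2 j (Finset.mem_univ j)
  simpa [Complex.normSq_eq_zero] using this

lemma trace_mul_conjTranspose_self {d : ℕ} (M : Matrix (Fin d) (Fin d) ℂ) :
    (M * Mᴴ).trace = ((∑ i, ∑ j, Complex.normSq (M i j) : ℝ) : ℂ) := by
  simp only [Matrix.trace, Matrix.diag, Matrix.mul_apply, Matrix.conjTranspose_apply]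
  push_cast
  congr 1; ext i; congr 1; ext j
  rw [← Complex.mul_conj]
  rfl

lemma trace_psd_mul {d : ℕ} {ρ Q : Matrix (Fin d) (Fin d) ℂ}
    (hρ : ρ.PosSemidef) (hQ : Q.PosSemidef) :
    ∃ t : ℝ, 0 ≤ t ∧ (ρ * Q).trace = (t : ℂ) ∧ (t = 0 → ρ * Q = 0) := by
  obtain ⟨A, rfl⟩ : ∃ A : Matrix (Fin d) (Fin d) ℂ, ρ = Aᴴ * A := by
    open scoped MatrixOrder in
    exact CStarAlgebra.nonneg_iff_eq_star_mul_self.mp hρ.nonneg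
  obtain ⟨B, rfl⟩ : ∃ B : Matrix (Fin d) (Fin d) ℂ, Q = Bᴴ * B := by
    open scoped MatrixOrder in
    exact CStarAlgebra.nonneg_iff_eq_star_mul_self.mp hQ.nonneg
  set M := A * Bᴴ with hM
  have h1 : Aᴴ * A * (Bᴴ * B) = Aᴴ * M * B := by
    rw [hM, Matrix.mul_assoc, Matrix.mul_assoc, Matrix.mul_assoc]
  have hsum : (0:ℝ) ≤ ∑ i, ∑ j, Complex.normSq (M i j) :=
    Finset.sum_nonneg fun i _ => Finset.sum_nonneg fun j _ => Complex.normSq_nonneg _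
  refine ⟨∑ i, ∑ j, Complex.normSq (M i j), hsum, ?_, ?_⟩
  · have h2 : Mᴴ = B * Aᴴ := by rw [hM, Matrix.conjTranspose_mul, Matrix.conjTranspose_conjTranspose]
    rw [h1, Matrix.trace_mul_cycle Aᴴ M B, ← Matrix.mul_assoc, ← h2, Matrix.mul_assoc, ← hM,
      Matrix.trace_mul_comm Mᴴ M, trace_mul_conjTranspose_self]
  · intro ht
    have hM0 : M = 0 := by
      ext i j
      have hi : ∀ i ∈ Finset.univ, (0:ℝ) ≤ ∑ j, Complex.normSq (M i j) :=
        fun i _ => Finset.sum_nonneg fun j _ => Complex.normSq_nonneg _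
      have h2 := (Finset.sum_eq_zero_iff_of_nonneg hi).mp ht i (Finset.mem_univ i)
      have hj : ∀ j ∈ Finset.univ, (0:ℝ) ≤ Complex.normSq (M i j) :=
        fun j _ => Complex.normSq_nonneg _
      have := (Finset.sum_eq_zero_iff_of_nonneg hj).mp h2 j (Finset.mem_univ j)
      simpa [Complex.normSq_eq_zero] using this
    rw [h1, hM0, Matrix.mul_zero, Matrix.zero_mul]

lemma trace_sq_le_one {d : ℕ} {ρ : Matrix (Fin d) (Fin d) ℂ}
    (hρ : ρ.PosSemidef) (htr : ρ.trace = 1) :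
    ∃ r : ℝ, r ≤ 1 ∧ (ρ * ρ).trace = (r : ℂ) := by
  have h := hρ.1
  set U : Matrix (Fin d) (Fin d) ℂ := (h.eigenvectorUnitary : Matrix (Fin d) (Fin d) ℂ) with hU
  set D : Matrix (Fin d) (Fin d) ℂ := diagonal (RCLike.ofReal ∘ h.eigenvalues) with hD
  have hUU : star U * U = 1 := Matrix.mem_unitaryGroup_iff'.mp (h.eigenvectorUnitary).2
  have hspec : ρ = U * D * star U := h.spectral_theorem
  have htrD : D.trace = ∑ i, (h.eigenvalues i : ℂ) := by
    rw [hD, Matrix.trace_diagonal]; rfl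
  have htr1 : ∑ i, h.eigenvalues i = 1 := by
    have : ρ.trace = ∑ i, (h.eigenvalues i : ℂ) := by
      rw [congrArg Matrix.trace hspec, Matrix.trace_mul_cycle U D (star U),
        hUU, Matrix.one_mul, htrD]
    rw [htr] at this
    have := this.symm
    rw [← Complex.ofReal_sum] at this
    exact_mod_cast this
  have hsq : ρ * ρ = U * (D * D) * star U := by
    conv_lhs => rw [hspec]
    calc U * D * star U * (U * D * star U) = U * D * (star U * U) * D * star U := by
          simp only [Matrix.mul_assoc]
      _ = U * (D * D) * star U := by rw [hUU]; simp only [Matrix.mul_one, Matrix.mul_assoc]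
  refine ⟨∑ i, (h.eigenvalues i) ^ 2, ?_, ?_⟩
  · calc ∑ i, (h.eigenvalues i) ^ 2 ≤ (∑ i, h.eigenvalues i) ^ 2 :=
          Finset.sum_sq_le_sq_sum_of_nonneg fun i _ => hρ.eigenvalues_nonneg i
      _ = 1 := by rw [htr1]; norm_num
  · rw [hsq, Matrix.trace_mul_cycle U (D*D) (star U), ← Matrix.mul_assoc, hUU, Matrix.one_mul,
      hD, Matrix.diagonal_mul_diagonal, Matrix.trace_diagonal]
    push_cast
    congr 1; ext i
    simp [sq]

lemma pure_trace_bound {d : ℕ} {ρ σ : Matrix (Fin d) (Fin d) ℂ}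
    (hρ : IsDensityMatrix ρ) (hσ : IsPureState σ) :
    ((σ * ρ).trace).re ≤ 1 ∧ (((σ * ρ).trace).re = 1 → ρ = σ) := by
  obtain ⟨⟨hσpsd, hσtr⟩, hσproj, -⟩ := hσ
  obtain ⟨hρpsd, hρtr⟩ := hρ
  set Q : Matrix (Fin d) (Fin d) ℂ := 1 - σ with hQdef
  have hQherm : Q.IsHermitian := by
    rw [hQdef]
    exact Matrix.isHermitian_one.sub hσpsd.1
  have hQproj : Q * Q = Q := by
    rw [hQdef]
    simp only [Matrix.sub_mul, Matrix.mul_sub, Matrix.one_mul, Matrix.mul_one, hσproj]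
    abel
  have hQpsd : Q.PosSemidef := by
    have : Q = Qᴴ * Q := by rw [hQherm.eq, hQproj]
    rw [this]
    exact Matrix.posSemidef_conjTranspose_mul_self Q
  obtain ⟨t, ht0, htr, hteq⟩ := trace_psd_mul hρpsd hQpsd
  have hkey : (σ * ρ).trace = 1 - (t : ℂ) := by
    have : (ρ * Q).trace = ρ.trace - (ρ * σ).trace := by
      rw [hQdef, Matrix.mul_sub, Matrix.mul_one, Matrix.trace_sub]
    rw [this, hρtr, Matrix.trace_mul_comm ρ σ] at htr
    linear_combination -htr
  constructor
  · rw [hkey]; simp; linarith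
  · intro h1
    have ht : t = 0 := by
      have := congrArg Complex.re hkey
      simp at this
      rw [h1] at this
      linarith
    have hρQ : ρ * Q = 0 := hteq ht
    have hρσ : ρ * σ = ρ := by
      have : ρ * Q = ρ - ρ * σ := by
        rw [hQdef, Matrix.mul_sub, Matrix.mul_one]
      rw [this] at hρQ
      exact (sub_eq_zero.mp hρQ).symm
    have hσρ : σ * ρ = ρ := by
      have h2 := congrArg Matrix.conjTranspose hρσ
      rwa [Matrix.conjTranspose_mul, hσpsd.1.eq, hρpsd.1.eq] at h2
    obtain ⟨r, hr1, hrtr⟩ := trace_sq_le_one hρpsd hρtr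
    set A : Matrix (Fin d) (Fin d) ℂ := ρ - σ with hA
    have hAherm : A.IsHermitian := hρpsd.1.sub hσpsd.1
    have hAA : A * A = ρ * ρ - ρ - ρ + σ := by
      rw [hA, Matrix.sub_mul, Matrix.mul_sub, Matrix.mul_sub, hρσ, hσρ, hσproj]
      abel
    have htrAA : (A * Aᴴ).trace = (r : ℂ) - 1 := by
      rw [hAherm.eq, hAA]
      rw [Matrix.trace_add, Matrix.trace_sub, Matrix.trace_sub, hrtr, hρtr, hσtr]
      ring
    rw [trace_mul_conjTranspose_self] at htrAA
    have hsreal : (∑ i, ∑ j, Complex.normSq (A i j)) = r - 1 := by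
      have : ((∑ i, ∑ j, Complex.normSq (A i j) : ℝ) : ℂ) = ((r - 1 : ℝ) : ℂ) := by
        rw [htrAA]; push_cast; ring
      exact_mod_cast this
    have hs0 : (∑ i, ∑ j, Complex.normSq (A i j)) = 0 := by
      have hnn : 0 ≤ ∑ i, ∑ j, Complex.normSq (A i j) :=
        Finset.sum_nonneg fun i _ => Finset.sum_nonneg fun j _ => Complex.normSq_nonneg _
      linarith
    have := sum_normSq_eq_zero hs0
    rw [hA] at this
    exact sub_eq_zero.mp this

lemma concentration {d : ℕ} (ℓ : Matrix (Fin d) (Fin d) ℂ → ℝ)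
    (hℓnonneg : ∀ ρ, 0 ≤ ℓ ρ)
    (π : Measure (Matrix (Fin d) (Fin d) ℂ)) [IsProbabilityMeasure π]
    (hπsupp : π {ρ | ¬ IsDensityMatrix ρ} = 0)
    (hℓint : Integrable ℓ π)
    (hℓρint : ∀ (i j : Fin d), Integrable (fun ρ => ℓ ρ • ρ i j) π)
    {Z : ℝ} (hZ : Z = ∫ ρ, ℓ ρ ∂π) (hZpos : 0 < Z)
    {σ : Matrix (Fin d) (Fin d) ℂ}
    (hσ : σ = Z⁻¹ • Matrix.of fun i j => ∫ ρ, ℓ ρ • ρ i j ∂π)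
    (hpure : IsPureState σ) :
    ∀ᵐ ρ ∂π, ℓ ρ = 0 ∨ ρ = σ := by
  -- the matrix of integrals equals Z • σ
  have hMint : (Matrix.of fun i j => ∫ ρ, ℓ ρ • ρ i j ∂π) = Z • σ := by
    rw [hσ, smul_smul, mul_inv_cancel₀ hZpos.ne', one_smul]
  -- the complex-valued function g ρ = ℓ ρ • tr(σ ρ), as a finite sum
  set g : Matrix (Fin d) (Fin d) ℂ → ℂ :=
    fun ρ => ∑ i, ∑ j, σ i j * (ℓ ρ • ρ j i) with hg
  have hgeq : ∀ ρ, g ρ = ℓ ρ • (σ * ρ).trace := by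
    intro ρ
    rw [hg]
    simp only [Matrix.trace, Matrix.diag, Matrix.mul_apply, Finset.smul_sum]
    congr 1; ext i; congr 1; ext j
    rw [mul_smul_comm]
  have hgint : Integrable g π := by
    rw [hg]
    apply integrable_finset_sum
    intro i _
    apply integrable_finset_sum
    intro j _
    exact (hℓρint j i).const_mul (σ i j)
  have hgval : ∫ ρ, g ρ ∂π = (Z : ℂ) := by
    rw [hg, integral_finset_sum _ (fun i _ => integrable_finset_sum _
      (fun j _ => (hℓρint j i).const_mul (σ i j)))]
    have : ∀ i, ∫ ρ, ∑ j, σ i j * (ℓ ρ • ρ j i) ∂π = ∑ j, σ i j * ∫ ρ, ℓ ρ • ρ j i ∂π := by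
      intro i
      rw [integral_finset_sum _ (fun j _ => (hℓρint j i).const_mul (σ i j))]
      congr 1; ext j
      exact MeasureTheory.integral_const_mul _ _
    simp_rw [this]
    have htr : ∑ i, ∑ j, σ i j * ∫ ρ, ℓ ρ • ρ j i ∂π = (σ * (Z • σ)).trace := by
      rw [← hMint]
      simp only [Matrix.trace, Matrix.diag, Matrix.mul_apply, Matrix.of_apply]
    rw [htr, Matrix.mul_smul, Matrix.trace_smul, hpure.2.1, hpure.1.2]
    simp
  -- the real function F
  set F : Matrix (Fin d) (Fin d) ℂ → ℝ := fun ρ => ℓ ρ - (g ρ).re with hF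
  have hFint : Integrable F π := hℓint.sub hgint.re
  have hFzero : ∫ ρ, F ρ ∂π = 0 := by
    have h1 : ∫ ρ, F ρ ∂π = (∫ ρ, ℓ ρ ∂π) - ∫ ρ, (g ρ).re ∂π := by
      rw [hF]
      exact integral_sub hℓint hgint.re
    have h2 : ∫ ρ, (g ρ).re ∂π = (∫ ρ, g ρ ∂π).re := by
      simpa using integral_re hgint
    rw [h1, h2, hgval, ← hZ]
    simp
  have hdens : ∀ᵐ ρ ∂π, IsDensityMatrix ρ := by
    rw [MeasureTheory.ae_iff]
    exact hπsupp
  have hFnonneg : 0 ≤ᵐ[π] F := by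
    filter_upwards [hdens] with ρ hρ
    have hb := (pure_trace_bound hρ hpure).1
    have : (g ρ).re = ℓ ρ * ((σ * ρ).trace).re := by
      rw [hgeq ρ, Complex.real_smul]
      simp
    rw [hF]
    simp only [Pi.zero_apply]
    rw [this]
    nlinarith [hℓnonneg ρ]
  have hFae : F =ᵐ[π] 0 := (integral_eq_zero_iff_of_nonneg_ae hFnonneg hFint).mp hFzero
  filter_upwards [hdens, hFae] with ρ hρdens hFρ
  simp only [Pi.zero_apply] at hFρ
  rw [hF] at hFρ
  simp only at hFρ
  have hgre : (g ρ).re = ℓ ρ * ((σ * ρ).trace).re := by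
    rw [hgeq ρ, Complex.real_smul]; simp
  rw [hgre] at hFρ
  by_cases hℓ0 : ℓ ρ = 0
  · exact Or.inl hℓ0
  · right
    apply (pure_trace_bound hρdens hpure).2
    have : ℓ ρ * (1 - ((σ * ρ).trace).re) = 0 := by linarith
    rcases mul_eq_zero.mp this with h | h
    · exact absurd h hℓ0
    · linarith

/-- A posterior-mean (Bayes) estimator cannot report two distinct pure
states `σ₁ = ρ̂(D₁)` and `σ₂ = ρ̂(D₂)` unless each dataset assigns zero likelihood to the
other's estimate: `L(σ₂, D₁) = 0` and `L(σ₁, D₂) = 0`. -/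
theorem bayes_two_pure_estimates_rule_out_each_other
    {d : ℕ} {𝒟 : Type*} [Fintype 𝒟] [Nonempty 𝒟]
    (L : Matrix (Fin d) (Fin d) ℂ → 𝒟 → ℝ)
    (hLmeas : ∀ D, Measurable fun ρ => L ρ D)
    (hLnonneg : ∀ ρ D, 0 ≤ L ρ D)
    (π : Measure (Matrix (Fin d) (Fin d) ℂ)) [IsProbabilityMeasure π]
    (hπsupp : π {ρ | ¬ IsDensityMatrix ρ} = 0)
    (hLint : ∀ D, Integrable (fun ρ => L ρ D) π)
    (hLρint : ∀ (D : 𝒟) (i j : Fin d), Integrable (fun ρ => L ρ D • ρ i j) π)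
    (Z : 𝒟 → ℝ) (hZ : ∀ D, Z D = ∫ ρ, L ρ D ∂π)
    (ρhat : 𝒟 → Matrix (Fin d) (Fin d) ℂ)
    (hρhat : ∀ D, ρhat D = (Z D)⁻¹ • Matrix.of fun i j => ∫ ρ, L ρ D • ρ i j ∂π)
    (D₁ D₂ : 𝒟) (hZ₁ : 0 < Z D₁) (hZ₂ : 0 < Z D₂)
    (hpure₁ : IsPureState (ρhat D₁)) (hpure₂ : IsPureState (ρhat D₂))
    (hne : ρhat D₁ ≠ ρhat D₂) :
    L (ρhat D₂) D₁ = 0 ∧ L (ρhat D₁) D₂ = 0 := by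
  have h₁ : ∀ᵐ ρ ∂π, L ρ D₁ = 0 ∨ ρ = ρhat D₁ :=
    concentration (fun ρ => L ρ D₁) (fun ρ => hLnonneg ρ D₁) π hπsupp (hLint D₁)
      (fun i j => hLρint D₁ i j) (hZ D₁) hZ₁ (hρhat D₁) hpure₁
  have h₂ : ∀ᵐ ρ ∂π, L ρ D₂ = 0 ∨ ρ = ρhat D₂ :=
    concentration (fun ρ => L ρ D₂) (fun ρ => hLnonneg ρ D₂) π hπsupp (hLint D₂)
      (fun i j => hLρint D₂ i j) (hZ D₂) hZ₂ (hρhat D₂) hpure₂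
  -- each estimate is an atom of π
  have hatom : ∀ D : 𝒟, 0 < Z D → (∀ᵐ ρ ∂π, L ρ D = 0 ∨ ρ = ρhat D) →
      π {ρhat D} ≠ 0 := by
    intro D hZD hae hc
    have hne' : ∀ᵐ ρ ∂π, ρ ≠ ρhat D := by
      rw [MeasureTheory.ae_iff]
      convert hc using 2
      ext ρ
      simp
    have hL0 : (fun ρ => L ρ D) =ᵐ[π] 0 := by
      filter_upwards [hae, hne'] with ρ hρ hρ'
      rcases hρ with h | h
      · exact h
      · exact absurd h hρ'
    have : ∫ ρ, L ρ D ∂π = 0 := by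
      rw [integral_congr_ae hL0]
      simp
    rw [← hZ D] at this
    linarith
  -- rule out nonzero likelihoods
  have key : ∀ (Da Db : 𝒟), 0 < Z Db → ρhat Db ≠ ρhat Da →
      (∀ᵐ ρ ∂π, L ρ Da = 0 ∨ ρ = ρhat Da) → (∀ᵐ ρ ∂π, L ρ Db = 0 ∨ ρ = ρhat Db) →
      L (ρhat Db) Da = 0 := by
    intro Da Db hZb hba hae_a hae_b
    by_contra hLne
    have hsub : {ρhat Db} ⊆ {ρ | ¬ (L ρ Da = 0 ∨ ρ = ρhat Da)} := by
      intro x hx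
      rw [Set.mem_singleton_iff] at hx
      subst hx
      simp only [Set.mem_setOf_eq]
      push_neg
      exact ⟨hLne, hba⟩
    have hzero : π {ρ | ¬ (L ρ Da = 0 ∨ ρ = ρhat Da)} = 0 := by
      rw [MeasureTheory.ae_iff] at hae_a
      exact hae_a
    have : π {ρhat Db} = 0 :=
      le_antisymm (hzero ▸ measure_mono hsub) zero_le
    exact hatom Db hZb hae_b this
  exact ⟨key D₁ D₂ hZ₂ hne.symm h₁ h₂, key D₂ D₁ hZ₁ hne h₂ h₁⟩
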